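/- Let ω ∈ (1,2). For every integer l, the l-th Fourier coefficient of the symbol g(θ) = (4 sin²(θ/2))^{ω/2} admits the closed form (1/(2π)) ∫_{-π}^{π} (4 sin²(θ/2))^{ω/2} e^{-i l θ} dθ = (-1)^l Γ(ω+1) / ( Γ(ω/2 - l + 1) · Γ(ω/2 + l + 1) ), where Γ is the real Gamma function (the left-hand side, a priori a complex number, equals this real number). -/

import Mathlib

open MeasureTheory Real

noncomputable def gsym (ω θ : ℝ) : ℝ := (4 * Real.sin (θ / 2) ^ 2) ^ (ω / 2)

theorem gsym_cont {ω : ℝ} (hω : 0 < ω) : Continuous (gsym ω) := by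
  apply Continuous.rpow_const
  · continuity
  · intro x; right; positivity

theorem gsym_nonneg (ω θ : ℝ) : 0 ≤ gsym ω θ := by
  unfold gsym; positivity

theorem hasDerivAt_F {ω : ℝ} (hω : ω ∈ Set.Ioo (1:ℝ) 2) (θ : ℝ) :
    HasDerivAt (fun t => gsym ω t * Real.sin (t/2))
      ((ω+1)/2 * gsym ω θ * Real.cos (θ/2)) θ := by
  have hω0 : (0:ℝ) < ω := lt_trans one_pos hω.1
  have hs : HasDerivAt (fun t : ℝ => Real.sin (t/2)) (Real.cos (θ/2) * (1/2)) θ := by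
    simpa [Function.comp_def] using (Real.hasDerivAt_sin (θ/2)).comp θ ((hasDerivAt_id θ).div_const 2)
  rcases eq_or_ne (Real.sin (θ/2)) 0 with h0 | h0
  · -- singular point
    have hg0 : gsym ω θ = 0 := by
      simp [gsym, h0, Real.zero_rpow (ne_of_gt (by positivity : (0:ℝ) < ω/2))]
    rw [hasDerivAt_iff_isLittleO]
    simp only [hg0, h0, mul_zero, zero_mul, sub_zero, smul_zero]
    -- bound |gsym ω t * sin (t/2)| ≤ |t-θ|^ω * |t-θ|
    obtain ⟨k, hk⟩ := Real.sin_eq_zero_iff.1 h0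
    have habs : ∀ t : ℝ, |Real.sin (t/2)| = |Real.sin ((t-θ)/2)| := by
      intro t
      have : t/2 = (t-θ)/2 + (k:ℝ) * π := by rw [hk]; ring
      rw [this, Real.sin_add_int_mul_pi]
      rcases Int.even_or_odd k with he | he
      · rw [he.neg_one_zpow]; simp
      · rw [Odd.neg_one_zpow he]; simp
    have hbound : ∀ t : ℝ, |gsym ω t * Real.sin (t/2)| ≤ |t - θ| ^ ω * |t - θ| := by
      intro t
      have h1 : |Real.sin ((t-θ)/2)| ≤ |t - θ| / 2 := by
        have := Real.abs_sin_le_abs (x := (t-θ)/2)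
        simpa [abs_div] using this
      have h2 : gsym ω t ≤ |t - θ| ^ ω := by
        have hin : 4 * Real.sin (t/2) ^ 2 ≤ (t - θ)^2 := by
          have : Real.sin (t/2)^2 = |Real.sin ((t-θ)/2)|^2 := by
            rw [← habs t, sq_abs]
          rw [this]
          nlinarith [mul_self_le_mul_self (abs_nonneg (Real.sin ((t-θ)/2))) h1,
            sq_abs (t - θ), sq_abs (Real.sin ((t-θ)/2))]
        calc gsym ω t ≤ ((t-θ)^2) ^ (ω/2) := by
              apply Real.rpow_le_rpow (by positivity) hin (by positivity)
          _ = |t - θ| ^ ω := by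
              rw [← sq_abs, ← Real.rpow_natCast |t-θ| 2, ← Real.rpow_mul (abs_nonneg _)]
              rw [show ((2:ℕ):ℝ) * (ω/2) = ω by push_cast; ring]
      rw [abs_mul, abs_of_nonneg (gsym_nonneg ω t)]
      have hsin : |Real.sin (t/2)| ≤ |t - θ| := by
        rw [habs t]; exact h1.trans (half_le_self (abs_nonneg _))
      exact mul_le_mul h2 hsin (abs_nonneg _) (by positivity)
    have h1 : Filter.Tendsto (fun t => |t - θ| ^ ω) (nhds θ) (nhds 0) := by
      have h2 : Filter.Tendsto (fun t:ℝ => |t - θ|) (nhds θ) (nhds 0) := by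
        have := (continuous_abs.comp (continuous_id.sub (continuous_const (y := θ)))).tendsto θ
        simpa [Function.comp_def] using this
      simpa [Real.zero_rpow hω0.ne'] using h2.rpow_const (Or.inr hω0.le)
    refine Asymptotics.isLittleO_iff.2 fun c hc => ?_
    filter_upwards [h1.eventually (gt_mem_nhds hc)] with t ht
    calc ‖gsym ω t * Real.sin (t/2)‖ = |gsym ω t * Real.sin (t/2)| := Real.norm_eq_abs _
      _ ≤ |t - θ| ^ ω * |t - θ| := hbound t
      _ ≤ c * ‖t - θ‖ := by
          apply mul_le_mul ht.le le_rfl (abs_nonneg _) hc.le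
  · have hu : HasDerivAt (fun t : ℝ => 4 * Real.sin (t/2) ^ 2)
        (4 * (2 * Real.sin (θ/2) * (Real.cos (θ/2) * (1/2)))) θ := by
      refine ((hs.pow 2).const_mul 4).congr_deriv (Eq.symm ?_)
      push_cast; ring
    have hupos : 0 < 4 * Real.sin (θ/2) ^ 2 := by positivity
    have hrw : HasDerivAt (fun t => gsym ω t)
        ((ω/2) * (4 * Real.sin (θ/2)^2) ^ (ω/2 - 1) * (4 * (2 * Real.sin (θ/2) * (Real.cos (θ/2) * (1/2))))) θ := by
      exact (Real.hasDerivAt_rpow_const (Or.inl hupos.ne')).comp θ hu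
    have hmul := hrw.mul hs
    refine hmul.congr_deriv (Eq.symm ?_)
    have hpow : (4 * Real.sin (θ/2)^2) ^ (ω/2 - 1) * (4 * Real.sin (θ/2)^2)
        = (4 * Real.sin (θ/2)^2) ^ (ω/2) := by
      rw [← Real.rpow_add_one hupos.ne' (ω/2 - 1)]
      norm_num
    simp only [show gsym ω θ = (4 * Real.sin (θ/2)^2) ^ (ω/2) from rfl]
    linear_combination (-(ω/2 * Real.cos (θ/2))) * hpow
open Complex in
theorem key1 (z w : ℂ) : Complex.cos z * Complex.exp w = (Complex.exp (w + z*I) + Complex.exp (w - z*I))/2 := by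
  have h : w - z*I = w + (-z)*I := by ring
  rw [h, Complex.exp_add, Complex.exp_add, Complex.exp_mul_I, Complex.exp_mul_I,
    Complex.cos_neg, Complex.sin_neg]
  ring
open Complex in
theorem key2 (z w : ℂ) : Complex.sin z * Complex.exp w * I = (Complex.exp (w + z*I) - Complex.exp (w - z*I))/2 := by
  have h : w - z*I = w + (-z)*I := by ring
  rw [h, Complex.exp_add, Complex.exp_add, Complex.exp_mul_I, Complex.exp_mul_I,
    Complex.cos_neg, Complex.sin_neg]
  ring

theorem deriv_identity (ω : ℝ) (l : ℤ) (θ : ℝ) (g : ℝ) :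
    (((ω+1)/2 * g * Real.cos (θ/2) : ℝ) : ℂ) * Complex.exp (-(Complex.I * ((l:ℂ)+1/2) * θ))
      + ((g * Real.sin (θ/2) : ℝ) : ℂ) *
        (-(Complex.I * ((l:ℂ)+1/2)) * Complex.exp (-(Complex.I * ((l:ℂ)+1/2) * θ)))
    = ((ω/2 - l : ℝ):ℂ)/2 * ((g:ℂ) * Complex.exp (-(Complex.I * (l:ℂ) * θ)))
      + ((ω/2 + l + 1 : ℝ):ℂ)/2 * ((g:ℂ) * Complex.exp (-(Complex.I * ((l:ℂ)+1) * θ))) := by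
  have h1 := key1 ((θ:ℂ)/2) (-(Complex.I * ((l:ℂ)+1/2) * θ))
  have h2 := key2 ((θ:ℂ)/2) (-(Complex.I * ((l:ℂ)+1/2) * θ))
  have e1 : -(Complex.I * ((l:ℂ)+1/2) * θ) + (θ:ℂ)/2*Complex.I = -(Complex.I * (l:ℂ) * θ) := by ring
  have e2 : -(Complex.I * ((l:ℂ)+1/2) * θ) - (θ:ℂ)/2*Complex.I = -(Complex.I * ((l:ℂ)+1) * θ) := by ring
  rw [e1, e2] at h1 h2
  push_cast
  linear_combination (((ω:ℂ)+1)/2 * (g:ℂ)) * h1 - (((l:ℂ)+1/2) * (g:ℂ)) * h2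

noncomputable def Ifc (ω : ℝ) (l : ℤ) : ℂ :=
  ∫ θ in (-π)..π, ((gsym ω θ : ℝ) : ℂ) * Complex.exp (-(Complex.I * (l : ℂ) * (θ : ℂ)))

theorem integrand_cont {ω : ℝ} (hω : 0 < ω) (c : ℂ) :
    Continuous (fun θ : ℝ => ((gsym ω θ : ℝ) : ℂ) * Complex.exp (-(c * (θ : ℂ)))) := by
  apply Continuous.mul
  · exact Complex.continuous_ofReal.comp (gsym_cont hω)
  · exact Complex.continuous_exp.comp (by continuity)

theorem Ifc_rec {ω : ℝ} (hω : ω ∈ Set.Ioo (1:ℝ) 2) (l : ℤ) :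
    ((ω/2 - l : ℝ) : ℂ) * Ifc ω l + ((ω/2 + l + 1 : ℝ) : ℂ) * Ifc ω (l+1) = 0 := by
  have hω0 : (0:ℝ) < ω := lt_trans one_pos hω.1
  set c : ℂ := Complex.I * ((l:ℂ) + 1/2) with hc
  -- the primitive
  set Φ : ℝ → ℂ := fun θ =>
    ((gsym ω θ * Real.sin (θ/2) : ℝ) : ℂ) * Complex.exp (-(c * (θ:ℂ))) with hΦ
  set Φ' : ℝ → ℂ := fun θ =>
    (((ω+1)/2 * gsym ω θ * Real.cos (θ/2) : ℝ) : ℂ) * Complex.exp (-(c * (θ:ℂ)))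
      + ((gsym ω θ * Real.sin (θ/2) : ℝ) : ℂ) * (-c * Complex.exp (-(c * (θ:ℂ)))) with hΦ'
  have hderiv : ∀ θ : ℝ, HasDerivAt Φ (Φ' θ) θ := by
    intro θ
    have hexp : HasDerivAt (fun θ : ℝ => Complex.exp (-(c * (θ:ℂ))))
        (-c * Complex.exp (-(c * (θ:ℂ)))) θ := by
      have h1 : HasDerivAt (fun θ : ℝ => -(c * (θ:ℂ))) (-c) θ := by
        simpa [Pi.neg_def] using (((hasDerivAt_id ((θ:ℂ))).const_mul c).comp_ofReal (z := θ)).neg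
      simpa [mul_comm] using h1.cexp
    have hF : HasDerivAt (fun t : ℝ => ((gsym ω t * Real.sin (t/2) : ℝ) : ℂ))
        ((((ω+1)/2 * gsym ω θ * Real.cos (θ/2) : ℝ)) : ℂ) θ := (hasDerivAt_F hω θ).ofReal_comp
    exact hF.mul hexp
  -- continuity of Φ'
  have hcont : Continuous Φ' := by
    apply Continuous.add
    · apply Continuous.mul
      · apply Complex.continuous_ofReal.comp
        apply Continuous.mul
        · exact continuous_const.mul (gsym_cont hω0)
        · continuity
      · exact Complex.continuous_exp.comp (by continuity)
    · apply Continuous.mul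
      · apply Complex.continuous_ofReal.comp
        exact (gsym_cont hω0).mul (by continuity)
      · exact continuous_const.mul (Complex.continuous_exp.comp (by continuity))
  have hFTC := intervalIntegral.integral_eq_sub_of_hasDerivAt
      (f := Φ) (f' := Φ') (a := -π) (b := π)
      (fun θ _ => hderiv θ) (hcont.intervalIntegrable _ _)
  -- boundary values vanish
  have hgeven : gsym ω (-π) = gsym ω π := by
    norm_num [gsym, show ((-π)/2:ℝ) = -(π/2) by ring, Real.sin_neg]
  have hbdry : Φ π - Φ (-π) = 0 := by
    have hsinπ : Real.sin (π/2) = 1 := Real.sin_pi_div_two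
    have hsinnegπ : Real.sin (-π/2) = -1 := by
      rw [show (-π/2 : ℝ) = -(π/2) by ring, Real.sin_neg, hsinπ]
    have h0 : Complex.cos (((l:ℂ)+1/2) * (π:ℂ)) = 0 := by
      rw [show (((l:ℂ)+1/2) * (π:ℂ)) = (l:ℂ)*(π:ℂ) + (π:ℂ)/2 by ring, Complex.cos_add,
        Complex.cos_pi_div_two, Complex.sin_pi_div_two, Complex.sin_int_mul_pi]
      ring
    have key : Complex.exp (-(c * ((π:ℝ):ℂ))) + Complex.exp (c * ((π:ℝ):ℂ)) = 0 := by
      rw [show (c * ((π:ℝ):ℂ)) = (((l:ℂ)+1/2) * (π:ℂ)) * Complex.I by rw [hc]; push_cast; ring,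
        show -((((l:ℂ)+1/2) * (π:ℂ)) * Complex.I) = (-(((l:ℂ)+1/2) * (π:ℂ))) * Complex.I by ring,
        Complex.exp_mul_I, Complex.exp_mul_I, Complex.cos_neg, Complex.sin_neg, h0]
      ring
    simp only [hΦ, hgeven, hsinπ, hsinnegπ, mul_one, mul_neg_one]
    push_cast
    rw [show -(c * -(π:ℂ)) = c * (π:ℂ) from by ring]
    linear_combination ((gsym ω π : ℝ):ℂ) * key
  have hid : ∀ θ : ℝ, Φ' θ =
      ((ω/2 - l : ℝ):ℂ)/2 * (((gsym ω θ : ℝ):ℂ) * Complex.exp (-(Complex.I * (l:ℂ) * (θ:ℂ))))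
        + ((ω/2 + l + 1 : ℝ):ℂ)/2 *
          (((gsym ω θ : ℝ):ℂ) * Complex.exp (-(Complex.I * ((l+1 : ℤ):ℂ) * (θ:ℂ)))) := by
    intro θ
    simp only [hΦ', hc]
    have h := deriv_identity ω l θ (gsym ω θ)
    push_cast at h ⊢
    linear_combination h
  have hsplit : (∫ θ in (-π)..π, Φ' θ) =
      ((ω/2 - l : ℝ):ℂ)/2 * Ifc ω l + ((ω/2 + l + 1 : ℝ):ℂ)/2 * Ifc ω (l+1) := by
    rw [intervalIntegral.integral_congr (g := fun θ =>
      ((ω/2 - l : ℝ):ℂ)/2 * (((gsym ω θ : ℝ):ℂ) * Complex.exp (-(Complex.I * (l:ℂ) * (θ:ℂ))))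
        + ((ω/2 + l + 1 : ℝ):ℂ)/2 *
          (((gsym ω θ : ℝ):ℂ) * Complex.exp (-(Complex.I * ((l+1 : ℤ):ℂ) * (θ:ℂ)))))
      (fun θ _ => hid θ)]
    rw [intervalIntegral.integral_add, intervalIntegral.integral_const_mul,
      intervalIntegral.integral_const_mul]
    · rfl
    · exact (continuous_const.mul (integrand_cont hω0 _)).intervalIntegrable _ _
    · exact (continuous_const.mul (integrand_cont hω0 _)).intervalIntegrable _ _
  have hz : ((ω/2 - l : ℝ):ℂ)/2 * Ifc ω l + ((ω/2 + l + 1 : ℝ):ℂ)/2 * Ifc ω (l+1) = 0 := by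
    rw [← hsplit, hFTC, hbdry]
  linear_combination 2 * hz

theorem beta_real {ω : ℝ} (hω : ω ∈ Set.Ioo (1:ℝ) 2) :
    (∫ t in (0:ℝ)..1, t^((ω-1)/2) * (1-t)^(-(1/2:ℝ)))
      = Real.Gamma ((ω+1)/2) * Real.Gamma (1/2) / Real.Gamma (ω/2 + 1) := by
  have hu : (0:ℝ) < (ω+1)/2 := by linarith [hω.1]
  have huv : (0:ℝ) < ω/2 + 1 := by linarith [hω.1]
  have hbc : Complex.betaIntegral (((ω+1)/2 : ℝ):ℂ) (((1/2 : ℝ)):ℂ)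
      = ((∫ t in (0:ℝ)..1, t^((ω-1)/2) * (1-t)^(-(1/2:ℝ)) : ℝ) : ℂ) := by
    rw [Complex.betaIntegral, ← intervalIntegral.integral_ofReal]
    refine intervalIntegral.integral_congr fun x hx => ?_
    rw [Set.uIcc_of_le (by norm_num : (0:ℝ) ≤ 1)] at hx
    have hle : (0:ℝ) ≤ 1 - x := by linarith [hx.2]
    rw [Complex.ofReal_mul, Complex.ofReal_cpow hx.1, Complex.ofReal_cpow hle]
    push_cast
    rw [show ((ω:ℂ)-1)/2 = ((ω:ℂ)+1)/2 - 1 by ring]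
    norm_num
  have hgam := Complex.Gamma_mul_Gamma_eq_betaIntegral
      (s := (((ω+1)/2 : ℝ):ℂ)) (t := ((1/2 : ℝ):ℂ))
      (by simpa using hu) (by norm_num)
  rw [hbc] at hgam
  rw [show (((ω+1)/2 : ℝ):ℂ) + ((1/2:ℝ):ℂ) = ((ω/2 + 1 : ℝ):ℂ) by push_cast; ring] at hgam
  rw [Complex.Gamma_ofReal, Complex.Gamma_ofReal, Complex.Gamma_ofReal] at hgam
  have hr : Real.Gamma ((ω+1)/2) * Real.Gamma (1/2)
      = Real.Gamma (ω/2+1) * ∫ t in (0:ℝ)..1, t^((ω-1)/2) * (1-t)^(-(1/2:ℝ)) := by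
    exact_mod_cast hgam
  rw [eq_div_iff (Real.Gamma_pos_of_pos huv).ne']
  linear_combination (-1 : ℝ) * hr

theorem Ifc_zero {ω : ℝ} (hω : ω ∈ Set.Ioo (1:ℝ) 2) :
    Ifc ω 0 = ((2 * π * Real.Gamma (ω+1) / (Real.Gamma (ω/2+1))^2 : ℝ) : ℂ) := by
  have hω0 : (0:ℝ) < ω := lt_trans one_pos hω.1
  -- reduce to a real integral
  have h1 : Ifc ω 0 = ((∫ θ in (-π)..π, gsym ω θ : ℝ) : ℂ) := by
    rw [Ifc, ← intervalIntegral.integral_ofReal]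
    apply intervalIntegral.integral_congr
    intro θ _
    simp
  -- evenness
  have heven : (∫ θ in (-π)..π, gsym ω θ) = 2 * ∫ θ in (0:ℝ)..π, gsym ω θ := by
    have hsplit := intervalIntegral.integral_add_adjacent_intervals
      (a := -π) (b := 0) (c := π) (f := gsym ω) (μ := volume)
      (((gsym_cont hω0)).intervalIntegrable _ _) (((gsym_cont hω0)).intervalIntegrable _ _)
    have hneg : (∫ θ in (-π)..(0:ℝ), gsym ω θ) = ∫ θ in (0:ℝ)..π, gsym ω θ := by
      have h := intervalIntegral.integral_comp_neg (a := 0) (b := π) (gsym ω)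
      rw [neg_zero] at h
      rw [← h]
      apply intervalIntegral.integral_congr
      intro θ _
      norm_num [gsym, show ∀ t:ℝ, -t/2 = -(t/2) from fun t => by ring, Real.sin_neg]
    linarith [hsplit, hneg]
  -- pointwise identity for the substitution integrand
  have hptI : ∀ θ ∈ Set.Ico (0:ℝ) π,
      (Real.sin (θ/2) * Real.cos (θ/2)) *
        ((2:ℝ)^ω * ((Real.sin (θ/2)^2)^((ω-1)/2) * (1 - Real.sin (θ/2)^2)^(-(1/2:ℝ))))
      = gsym ω θ := by
    intro θ hθ
    rcases eq_or_lt_of_le hθ.1 with h|h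
    · rw [← h]
      norm_num [gsym, Real.zero_rpow (ne_of_gt (by positivity : (0:ℝ) < ω/2))]
    · have hsin : 0 < Real.sin (θ/2) :=
        Real.sin_pos_of_pos_of_lt_pi (by linarith) (by linarith [Real.pi_pos, hθ.2])
      have hcos : 0 < Real.cos (θ/2) :=
        Real.cos_pos_of_mem_Ioo ⟨by linarith [Real.pi_pos], by linarith [hθ.2]⟩
      have e1 : (Real.sin (θ/2)^2)^((ω-1)/2) = Real.sin (θ/2) ^ (ω-1) := by
        rw [← Real.rpow_natCast (Real.sin (θ/2)) 2, ← Real.rpow_mul hsin.le,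
          show ((2:ℕ):ℝ)*((ω-1)/2) = ω-1 by push_cast; ring]
      have e2 : (1 - Real.sin (θ/2)^2)^(-(1/2:ℝ)) = (Real.cos (θ/2))⁻¹ := by
        rw [show (1 : ℝ) - Real.sin (θ/2)^2 = Real.cos (θ/2)^2 by
            nlinarith [Real.sin_sq_add_cos_sq (θ/2)],
          ← Real.rpow_natCast (Real.cos (θ/2)) 2, ← Real.rpow_mul hcos.le,
          show ((2:ℕ):ℝ)*(-(1/2:ℝ)) = -1 by push_cast; ring, Real.rpow_neg_one]
      have e3 : gsym ω θ = 2^ω * Real.sin (θ/2)^ω := by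
        rw [gsym, show (4:ℝ) * Real.sin (θ/2)^2 = (2*Real.sin (θ/2))^2 by ring,
          ← Real.rpow_natCast (2*Real.sin (θ/2)) 2, ← Real.rpow_mul (by positivity),
          show ((2:ℕ):ℝ)*(ω/2) = ω by push_cast; ring,
          Real.mul_rpow (by norm_num) hsin.le]
      have e4 : Real.sin (θ/2) * Real.sin (θ/2)^(ω-1) = Real.sin (θ/2)^ω := by
        rw [show ω = (ω-1)+1 by ring, Real.rpow_add_one hsin.ne']; ring
      rw [e1, e2, e3, ← e4]
      field_simp
  -- derivative of the substitution map
  have hder : ∀ θ : ℝ, HasDerivAt (fun t => Real.sin (t/2)^2)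
      (Real.sin (θ/2) * Real.cos (θ/2)) θ := by
    intro θ
    have hs : HasDerivAt (fun t : ℝ => Real.sin (t/2)) (Real.cos (θ/2) * (1/2)) θ := by
      simpa [Function.comp_def] using (Real.hasDerivAt_sin (θ/2)).comp θ ((hasDerivAt_id θ).div_const 2)
    refine (hs.pow 2).congr_deriv (Eq.symm ?_)
    push_cast; ring
  -- integrability of the beta integrand on [0,1]
  have hii : IntervalIntegrable
      (fun t : ℝ => (2:ℝ)^ω * (t^((ω-1)/2) * (1-t)^(-(1/2:ℝ)))) volume 0 1 := by
    have b1 : IntervalIntegrable (fun t : ℝ => (1-t)^(-(1/2:ℝ))) volume 0 1 := by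
      have h0 := intervalIntegral.intervalIntegrable_rpow' (r := -(1/2:ℝ)) (by norm_num) (a := 0) (b := 1)
      have h1 := h0.comp_sub_left 1
      norm_num at h1
      exact h1.symm
    have hcontOn : ContinuousOn (fun t : ℝ => (2:ℝ)^ω * t^((ω-1)/2)) (Set.uIcc 0 1) := by
      apply Continuous.continuousOn
      exact continuous_const.mul (continuous_id.rpow_const
        (fun x => Or.inr (by linarith [hω.1])))
    have := b1.continuousOn_mul hcontOn
    simpa [mul_assoc] using this
  -- substitution
  have him : (fun t => Real.sin (t/2)^2) '' Set.uIcc 0 π ⊆ Set.Icc 0 1 := by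
    rintro _ ⟨θ, _, rfl⟩
    exact ⟨sq_nonneg _, Real.sin_sq_le_one _⟩
  have hsub : (∫ θ in (0:ℝ)..π, (Real.sin (θ/2) * Real.cos (θ/2)) •
        ((fun t : ℝ => (2:ℝ)^ω * (t^((ω-1)/2) * (1-t)^(-(1/2:ℝ))))
          ∘ (fun t => Real.sin (t/2)^2)) θ)
      = ∫ t in (0:ℝ)..1, (2:ℝ)^ω * (t^((ω-1)/2) * (1-t)^(-(1/2:ℝ))) := by
    have h := intervalIntegral.integral_comp_smul_deriv'''
      (a := 0) (b := π) (f := fun t => Real.sin (t/2)^2)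
      (f' := fun θ => Real.sin (θ/2) * Real.cos (θ/2))
      (g := fun t : ℝ => (2:ℝ)^ω * (t^((ω-1)/2) * (1-t)^(-(1/2:ℝ))))
      (by fun_prop) ?_ ?_ ?_ ?_
    · rw [h]
      norm_num
    · intro θ hθ
      exact (hder θ).hasDerivWithinAt
    · -- continuity on image of open interval
      rw [min_eq_left Real.pi_pos.le, max_eq_right Real.pi_pos.le]
      have hsubset : (fun t => Real.sin (t/2)^2) '' Set.Ioo 0 π ⊆ Set.Ioo 0 1 := by
        rintro _ ⟨θ, hθ, rfl⟩
        have hsin : 0 < Real.sin (θ/2) :=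
          Real.sin_pos_of_pos_of_lt_pi (by linarith [hθ.1]) (by linarith [hθ.2, Real.pi_pos])
        have hcos : 0 < Real.cos (θ/2) :=
          Real.cos_pos_of_mem_Ioo ⟨by linarith [hθ.1, Real.pi_pos], by linarith [hθ.2]⟩
        constructor
        · positivity
        · nlinarith [Real.sin_sq_add_cos_sq (θ/2)]
      apply ContinuousOn.mono _ hsubset
      apply ContinuousOn.mul continuousOn_const
      apply ContinuousOn.mul
      · intro t ht
        exact (Real.continuousAt_rpow_const t _ (Or.inl ht.1.ne')).continuousWithinAt
      · intro t ht
        exact (((Real.continuousAt_rpow_const (1-t) _ (Or.inl (sub_pos.2 ht.2).ne'))).comp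
          ((continuous_const.sub continuous_id).continuousAt)).continuousWithinAt
    · -- integrable on image of closed interval
      apply MeasureTheory.IntegrableOn.mono_set _ him
      rw [integrableOn_Icc_iff_integrableOn_Ioc]
      exact (intervalIntegrable_iff_integrableOn_Ioc_of_le (by norm_num)).1 hii
    · -- integrability of the substituted integrand
      apply MeasureTheory.Integrable.congr ((gsym_cont hω0).integrableOn_uIcc)
      have h0 : ∀ᵐ θ : ℝ, θ ≠ π := by
        rw [MeasureTheory.ae_iff, show {a : ℝ | ¬ a ≠ π} = {π} by ext a; simp]
        exact Real.volume_singleton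
      filter_upwards [MeasureTheory.ae_restrict_of_ae h0,
        MeasureTheory.ae_restrict_mem measurableSet_uIcc] with θ hne hmem
      rw [Set.uIcc_of_le Real.pi_pos.le] at hmem
      have := hptI θ ⟨hmem.1, lt_of_le_of_ne hmem.2 hne⟩
      simpa [smul_eq_mul] using this.symm
  -- put everything together (real part)
  have hmain : (∫ θ in (0:ℝ)..π, gsym ω θ)
      = (2:ℝ)^ω * (Real.Gamma ((ω+1)/2) * Real.Gamma (1/2) / Real.Gamma (ω/2 + 1)) := by
    have hcg : (∫ θ in (0:ℝ)..π, gsym ω θ)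
        = ∫ θ in (0:ℝ)..π, (Real.sin (θ/2) * Real.cos (θ/2)) •
            ((fun t : ℝ => (2:ℝ)^ω * (t^((ω-1)/2) * (1-t)^(-(1/2:ℝ))))
              ∘ (fun t => Real.sin (t/2)^2)) θ := by
      apply intervalIntegral.integral_congr_ae
      have h0 : ∀ᵐ θ : ℝ, θ ≠ π := by
        rw [MeasureTheory.ae_iff, show {a : ℝ | ¬ a ≠ π} = {π} by ext a; simp]
        exact Real.volume_singleton
      filter_upwards [h0] with θ hne hmem
      rw [Set.uIoc_of_le Real.pi_pos.le] at hmem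
      have := hptI θ ⟨hmem.1.le, lt_of_le_of_ne hmem.2 hne⟩
      simpa [smul_eq_mul] using this.symm
    rw [hcg, hsub, intervalIntegral.integral_const_mul, beta_real hω]
  -- final numerics
  rw [h1, heven, hmain]
  norm_cast
  have key : Real.Gamma ((ω+1)/2) * Real.Gamma (ω/2+1)
      = Real.Gamma (ω+1) * (2:ℝ)^(-ω) * Real.sqrt π := by
    have hdup := Real.Gamma_mul_Gamma_add_half ((ω+1)/2)
    rw [show (ω+1)/2 + 1/2 = ω/2+1 by ring, show 2*((ω+1)/2) = ω+1 by ring,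
      show (1:ℝ) - (ω+1) = -ω by ring] at hdup
    linarith [hdup]
  have hΓw : 0 < Real.Gamma (ω/2+1) := Real.Gamma_pos_of_pos (by linarith [hω.1])
  have h2 : (2:ℝ)^ω * (2:ℝ)^(-ω) = 1 := by
    rw [← Real.rpow_add two_pos]; norm_num
  have hsq : Real.sqrt π * Real.sqrt π = π := Real.mul_self_sqrt Real.pi_pos.le
  rw [Real.Gamma_one_half_eq]
  rw [show 2 * ((2:ℝ)^ω * (Real.Gamma ((ω+1)/2) * Real.sqrt π / Real.Gamma (ω/2+1)))
      = (2 * (2:ℝ)^ω * Real.Gamma ((ω+1)/2) * Real.sqrt π) / Real.Gamma (ω/2+1) by ring,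
    div_eq_div_iff hΓw.ne' (by positivity : (Real.Gamma (ω/2+1))^2 ≠ 0)]
  linear_combination (2*(2:ℝ)^ω*Real.sqrt π*Real.Gamma (ω/2+1))*key
    + (2*Real.Gamma (ω+1)*Real.Gamma (ω/2+1)*(Real.sqrt π * Real.sqrt π))*h2
    + (2*Real.Gamma (ω+1)*Real.Gamma (ω/2+1))*hsq

noncomputable def Tcoef (ω : ℝ) (l : ℤ) : ℝ :=
  (-1:ℝ)^l * Real.Gamma (ω+1) / (Real.Gamma (ω/2 - l + 1) * Real.Gamma (ω/2 + l + 1))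

theorem half_ne_int {ω : ℝ} (hω : ω ∈ Set.Ioo (1:ℝ) 2) : ∀ k : ℤ, (ω/2 : ℝ) ≠ k := by
  intro k h
  rcases le_or_gt k 0 with hk | hk
  · have : (k:ℝ) ≤ 0 := by exact_mod_cast hk
    linarith [hω.1]
  · have : (1:ℝ) ≤ k := by exact_mod_cast hk
    linarith [hω.2]

theorem GammaA_ne {ω : ℝ} (hω : ω ∈ Set.Ioo (1:ℝ) 2) (l : ℤ) :
    Real.Gamma (ω/2 - l + 1) ≠ 0 := by
  apply Real.Gamma_ne_zero
  intro m hm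
  exact half_ne_int hω (l - 1 - m) (by push_cast; linarith [hm])

theorem GammaB_ne {ω : ℝ} (hω : ω ∈ Set.Ioo (1:ℝ) 2) (l : ℤ) :
    Real.Gamma (ω/2 + l + 1) ≠ 0 := by
  apply Real.Gamma_ne_zero
  intro m hm
  exact half_ne_int hω (-l - 1 - m) (by push_cast; linarith [hm])

theorem Tcoef_rec {ω : ℝ} (hω : ω ∈ Set.Ioo (1:ℝ) 2) (l : ℤ) :
    (ω/2 - l) * Tcoef ω l + (ω/2 + l + 1) * Tcoef ω (l+1) = 0 := by
  have h1ne : ω/2 - (l:ℝ) ≠ 0 := fun h => half_ne_int hω l (by linarith)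
  have h2ne : ω/2 + (l:ℝ) + 1 ≠ 0 := fun h => half_ne_int hω (-l-1) (by push_cast; linarith)
  have hA := GammaA_ne hω l
  have hB := GammaB_ne hω l
  have hA' : Real.Gamma (ω/2 - l) ≠ 0 := by
    apply Real.Gamma_ne_zero
    intro m hm
    exact half_ne_int hω (l - m) (by push_cast; linarith [hm])
  unfold Tcoef
  push_cast
  rw [show ω/2 - ((l:ℝ)+1) + 1 = ω/2 - l by ring,
    show ω/2 + ((l:ℝ)+1) + 1 = (ω/2 + l + 1) + 1 by ring,
    Real.Gamma_add_one h2ne,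
    show ω/2 - (l:ℝ) + 1 = (ω/2 - l) + 1 by ring,
    Real.Gamma_add_one h1ne,
    zpow_add_one₀ (by norm_num : (-1:ℝ) ≠ 0)]
  simp only [← mul_div_assoc]
  rw [div_add_div _ _ (mul_ne_zero (mul_ne_zero h1ne hA') hB)
    (mul_ne_zero hA' (mul_ne_zero h2ne hB)), div_eq_zero_iff]
  left
  ring

theorem Ifc_eq {ω : ℝ} (hω : ω ∈ Set.Ioo (1:ℝ) 2) (l : ℤ) :
    Ifc ω l = ((2 * π * Tcoef ω l : ℝ) : ℂ) := by
  have key : ∀ l : ℤ, Ifc ω l = ((2 * π * Tcoef ω l : ℝ) : ℂ) →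
      Ifc ω (l+1) = ((2 * π * Tcoef ω (l+1) : ℝ) : ℂ) := by
    intro l ih
    have hBne : ((ω/2 + l + 1 : ℝ):ℂ) ≠ 0 := by
      have hr : (ω/2 + l + 1 : ℝ) ≠ 0 := fun h => half_ne_int hω (-l-1) (by push_cast; linarith)
      exact_mod_cast hr
    have hrec := Ifc_rec hω l
    have hr : (ω/2 - l) * (2*π*Tcoef ω l) + (ω/2+l+1)*(2*π*Tcoef ω (l+1)) = 0 := by
      linear_combination (2*π) * Tcoef_rec hω l
    have hrc : ((ω/2 - l : ℝ):ℂ) * ((2*π*Tcoef ω l : ℝ):ℂ)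
        + ((ω/2+l+1 : ℝ):ℂ) * ((2*π*Tcoef ω (l+1) : ℝ):ℂ) = 0 := by exact_mod_cast hr
    apply mul_left_cancel₀ hBne
    rw [eq_neg_of_add_eq_zero_right hrec, eq_neg_of_add_eq_zero_right hrc, ih]
  have keydown : ∀ l : ℤ, Ifc ω (l+1) = ((2 * π * Tcoef ω (l+1) : ℝ) : ℂ) →
      Ifc ω l = ((2 * π * Tcoef ω l : ℝ) : ℂ) := by
    intro l ih
    have hAne : ((ω/2 - l : ℝ):ℂ) ≠ 0 := by
      have hr : (ω/2 - l : ℝ) ≠ 0 := fun h => half_ne_int hω l (by linarith)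
      exact_mod_cast hr
    have hrec := Ifc_rec hω l
    have hr : (ω/2 - l) * (2*π*Tcoef ω l) + (ω/2+l+1)*(2*π*Tcoef ω (l+1)) = 0 := by
      linear_combination (2*π) * Tcoef_rec hω l
    have hrc : ((ω/2 - l : ℝ):ℂ) * ((2*π*Tcoef ω l : ℝ):ℂ)
        + ((ω/2+l+1 : ℝ):ℂ) * ((2*π*Tcoef ω (l+1) : ℝ):ℂ) = 0 := by exact_mod_cast hr
    apply mul_left_cancel₀ hAne
    rw [eq_neg_of_add_eq_zero_left hrec, eq_neg_of_add_eq_zero_left hrc, ih]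
  induction l using Int.induction_on with
  | zero =>
      rw [Ifc_zero hω]
      norm_cast
      unfold Tcoef
      norm_num
      ring
  | succ i ih => exact key i ih
  | pred i ih =>
      apply keydown
      rw [show (-(i:ℤ) - 1 + 1) = -(i:ℤ) by ring]
      exact ih

/-- For `ω ∈ (1,2)`, the `l`-th Fourier coefficient of the symbol
`g(θ) = (4 sin²(θ/2))^{ω/2}` admits the closed form
`(1/(2π)) ∫_{-π}^{π} (4 sin²(θ/2))^{ω/2} e^{-ilθ} dθ
  = (-1)^l Γ(ω+1) / (Γ(ω/2 - l + 1) Γ(ω/2 + l + 1))`. -/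
theorem fourier_coefficient_closed_form
    (ω : ℝ) (hω : ω ∈ Set.Ioo (1 : ℝ) 2) (l : ℤ) :
    (1 / (2 * Real.pi) : ℂ) *
        ∫ θ in (-Real.pi)..Real.pi,
          (((4 * Real.sin (θ / 2) ^ 2) ^ (ω / 2) : ℝ) : ℂ) *
            Complex.exp (-(Complex.I * (l : ℂ) * (θ : ℂ))) =
      (((-1 : ℝ) ^ l * Real.Gamma (ω + 1) /
          (Real.Gamma (ω / 2 - l + 1) * Real.Gamma (ω / 2 + l + 1)) : ℝ) : ℂ) := by
  have h : (∫ θ in (-Real.pi)..Real.pi,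
      (((4 * Real.sin (θ / 2) ^ 2) ^ (ω / 2) : ℝ) : ℂ) *
        Complex.exp (-(Complex.I * (l : ℂ) * (θ : ℂ)))) = Ifc ω l := rfl
  rw [h, Ifc_eq hω l]
  unfold Tcoef
  have hπ : ((π:ℝ):ℂ) ≠ 0 := by exact_mod_cast Real.pi_ne_zero
  push_cast
  field_simp
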